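/- Fix integers r ≥ 2 and M > 0. There exist constants c₁₀, C₁₀ > 0 depending only on r and M such that for every n ≥ r, every β ∈ B_{∞,M}, and G drawn from the r-uniform hypergraph β-model with parameter β, with probability at least 1 − e^{−c₁₀ n} one has ‖d(G) − E_β[d(G)]‖₂ ≤ C₁₀ n^{r/2}, where E_β[d(G)] = μ(β) with μ_i(β) = Σ_{e : i ∈ e} σ(Σ_{j∈e} β_j). -/

import Mathlib

open MeasureTheory Finset
open scoped BigOperators ENNReal NNReal Classical

noncomputable section

/-- The type of potential hyperedges: `r`-element subsets of `[n]`. -/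
abbrev Edge (n r : ℕ) := {e : Finset (Fin n) // e.card = r}

/-- An `r`-uniform hypergraph on `n` vertices, given by its hyperedge indicator. -/
abbrev HG (n r : ℕ) := Edge n r → Bool

/-- The logistic sigmoid `σ(t) = e^t / (1 + e^t)`. -/
def sigmoid (t : ℝ) : ℝ := Real.exp t / (1 + Real.exp t)

/-- The derivative of the sigmoid, `σ'(t) = e^t / (1 + e^t)^2`. -/
def sigmoid' (t : ℝ) : ℝ := Real.exp t / (1 + Real.exp t) ^ 2

/-- The `r`-degree of vertex `i` in `G`: the number of hyperedges of `G` containing `i`. -/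
def deg {n r : ℕ} (G : HG n r) (i : Fin n) : ℕ :=
  (Finset.univ.filter fun e : Edge n r => G e = true ∧ i ∈ e.1).card

/-- The probability of the hypergraph `G` under the `r`-uniform hypergraph β-model
with parameter `β`. -/
def hgWeight {n r : ℕ} (β : Fin n → ℝ) (G : HG n r) : ℝ :=
  ∏ e : Edge n r,
    if G e then sigmoid (∑ j ∈ e.1, β j) else 1 - sigmoid (∑ j ∈ e.1, β j)

/-- Membership in the sup-norm ball `B_{∞,M}`. -/
def inBall {n : ℕ} (M : ℝ) (β : Fin n → ℝ) : Prop := ∀ i, |β i| ≤ M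

/-- Two hypergraphs are adjacent if they differ in exactly one hyperedge. -/
def Adjacent {n r : ℕ} (G G' : HG n r) : Prop :=
  ∃ e : Edge n r, G e ≠ G' e ∧ ∀ f : Edge n r, f ≠ e → G f = G' f

/-- Probability mass function of the discrete Laplace distribution with parameter `α`. -/
def dLap (α : ℝ) (z : ℤ) : ℝ := ((1 - α) / (1 + α)) * α ^ z.natAbs

/-- Joint pmf of `n` i.i.d. discrete Laplace variables. -/
def dLapVec {n : ℕ} (α : ℝ) (z : Fin n → ℤ) : ℝ := ∏ i, dLap α (z i)

/-- Real-valued indicator of a proposition. -/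
def ind (p : Prop) : ℝ := if p then 1 else 0

/-- Expected `r`-degree of vertex `i` under the β-model: `μ_i(β) = Σ_{e ∋ i} σ(Σ_{j∈e} β_j)`. -/
def μdeg (n r : ℕ) (β : Fin n → ℝ) (i : Fin n) : ℝ :=
  ∑ e : Edge n r, if i ∈ e.1 then sigmoid (∑ j ∈ e.1, β j) else 0


section Stmt16Aux

lemma sum_pi_bool {ι : Type*} [Fintype ι] [DecidableEq ι] (f : ι → Bool → ℝ) :
    ∑ G : ι → Bool, ∏ e, f e (G e) = ∏ e, (f e true + f e false) := by
  have h := Finset.prod_univ_sum (fun _ : ι => (Finset.univ : Finset Bool)) f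
  rw [Fintype.piFinset_univ] at h
  rw [← h]
  refine Finset.prod_congr rfl fun e _ => ?_
  simp [Fintype.sum_bool]

lemma exp_mul_le {y : ℝ} (t : ℝ) (hy : |y| ≤ 1) :
    Real.exp (t * y) ≤ (1 + y) / 2 * Real.exp t + (1 - y) / 2 * Real.exp (-t) := by
  obtain ⟨h1, h2⟩ := abs_le.mp hy
  have ha : (0:ℝ) ≤ (1 - y)/2 := by linarith
  have hb : (0:ℝ) ≤ (1 + y)/2 := by linarith
  have hab : (1 - y)/2 + (1 + y)/2 = (1:ℝ) := by ring
  have h := convexOn_exp.2 (Set.mem_univ (-t)) (Set.mem_univ t) ha hb hab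
  simp only [smul_eq_mul] at h
  have he : (1 - y)/2 * (-t) + (1 + y)/2 * t = t * y := by ring
  rw [he] at h
  linarith

lemma edge_mgf (t : ℝ) {p : ℝ} (h0 : 0 ≤ p) (h1 : p ≤ 1) :
    p * Real.exp (t * (1 - p)) + (1 - p) * Real.exp (t * (-p)) ≤ Real.exp (t ^ 2 / 2) := by
  have hA := exp_mul_le (y := 1 - p) t (by rw [abs_le]; constructor <;> linarith)
  have hB := exp_mul_le (y := -p) t (by rw [abs_le]; constructor <;> linarith)
  have hcosh : Real.cosh t ≤ Real.exp (t ^ 2 / 2) := Real.cosh_le_exp_half_sq t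
  rw [Real.cosh_eq] at hcosh
  nlinarith [mul_le_mul_of_nonneg_left hA h0,
    mul_le_mul_of_nonneg_left hB (by linarith : (0:ℝ) ≤ 1 - p)]

lemma sum_weight_one {ι : Type*} [Fintype ι] [DecidableEq ι] (p : ι → ℝ) :
    ∑ G : ι → Bool, ∏ e, (if G e then p e else 1 - p e) = 1 := by
  rw [sum_pi_bool (f := fun e b => if b then p e else 1 - p e)]
  simp

lemma sum_weight_exp {ι : Type*} [Fintype ι] [DecidableEq ι] (p a : ι → ℝ)
    (h0 : ∀ e, 0 ≤ p e) (h1 : ∀ e, p e ≤ 1) :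
    ∑ G : ι → Bool, (∏ e, if G e then p e else 1 - p e) *
        Real.exp (∑ e, a e * ((if G e then (1:ℝ) else 0) - p e))
      ≤ Real.exp (∑ e, a e ^ 2 / 2) := by
  have key : ∀ G : ι → Bool,
      (∏ e, if G e then p e else 1 - p e) *
        Real.exp (∑ e, a e * ((if G e then (1:ℝ) else 0) - p e))
      = ∏ e, ((if G e then p e else 1 - p e) *
          Real.exp (a e * ((if G e then (1:ℝ) else 0) - p e))) := by
    intro G
    rw [Real.exp_sum, ← Finset.prod_mul_distrib]
  simp_rw [key]
  rw [sum_pi_bool (f := fun e b => (if b then p e else 1 - p e) *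
      Real.exp (a e * ((if b then (1:ℝ) else 0) - p e)))]
  rw [Real.exp_sum]
  apply Finset.prod_le_prod
  · intro e _
    have ha := h0 e; have hb := h1 e
    have e1 := Real.exp_pos (a e * ((1:ℝ) - p e))
    have e2 := Real.exp_pos (a e * ((0:ℝ) - p e))
    simp only [Bool.false_eq_true, if_true, if_false]
    nlinarith
  · intro e _
    have h := edge_mgf (a e) (h0 e) (h1 e)
    simpa [sub_eq_add_neg, zero_sub] using h

lemma gauss_lin (t : ℝ) :
    ∫ x : ℝ, Real.exp (t * x - x ^ 2 / 2)
      = Real.exp (t ^ 2 / 2) * Real.sqrt (2 * Real.pi) := by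
  have h : ∀ x : ℝ, Real.exp (t * x - x ^ 2 / 2)
      = Real.exp (t ^ 2 / 2) * Real.exp (-(1/2) * (x - t) ^ 2) := by
    intro x; rw [← Real.exp_add]; congr 1; ring
  simp_rw [h]
  rw [integral_const_mul]
  rw [integral_sub_right_eq_self (fun x => Real.exp (-(1/2) * x ^ 2)) t]
  rw [integral_gaussian]
  congr 1
  rw [div_div_eq_mul_div, div_one]
  ring_nf

lemma gauss_lin_integrable (t : ℝ) :
    Integrable (fun x : ℝ => Real.exp (t * x - x ^ 2 / 2)) := by
  have h : (fun x : ℝ => Real.exp (t * x - x ^ 2 / 2))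
      = fun x => Real.exp (t ^ 2 / 2) * Real.exp (-(1/2) * (x - t) ^ 2) := by
    funext x; rw [← Real.exp_add]; congr 1; ring
  rw [h]
  exact ((integrable_exp_neg_mul_sq (by norm_num)).comp_sub_right t).const_mul _

lemma gauss_quad : ∫ x : ℝ, Real.exp (-(3/8) * x ^ 2) ≤ 2 * Real.sqrt (2 * Real.pi) := by
  rw [integral_gaussian]
  have h4 : (2 : ℝ) * Real.sqrt (2 * Real.pi) = Real.sqrt (4 * (2 * Real.pi)) := by
    rw [Real.sqrt_mul (by norm_num : (0:ℝ) ≤ 4),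
      show (4:ℝ) = 2^2 by norm_num, Real.sqrt_sq (by norm_num : (0:ℝ) ≤ 2)]
  rw [h4]
  apply Real.sqrt_le_sqrt
  nlinarith [Real.pi_nonneg]

lemma sigmoid_nonneg' (t : ℝ) : 0 ≤ sigmoid t := by
  have := Real.exp_pos t
  unfold sigmoid; positivity

lemma sigmoid_le_one' (t : ℝ) : sigmoid t ≤ 1 := by
  have h := Real.exp_pos t
  rw [sigmoid, div_le_one (by linarith)]
  linarith

lemma card_edges_mem {n r : ℕ} (i : Fin n) :
    ((Finset.univ.filter fun e : Edge n r => i ∈ e.1).card : ℝ) ≤ (n : ℝ) ^ (r - 1) := by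
  have hnat : (Finset.univ.filter fun e : Edge n r => i ∈ e.1).card ≤ n ^ (r - 1) := by
    have hinj : ((Finset.univ.filter fun e : Edge n r => i ∈ e.1)).card
        ≤ (Finset.powersetCard (r - 1) (Finset.univ : Finset (Fin n))).card := by
      apply Finset.card_le_card_of_injOn (fun e => e.1.erase i)
      · intro e he
        rw [Finset.mem_coe, Finset.mem_filter] at he
        rw [Finset.mem_coe, Finset.mem_powersetCard]
        exact ⟨Finset.subset_univ _, by rw [Finset.card_erase_of_mem he.2, e.2]⟩
      · intro e₁ h₁ e₂ h₂ hee
        rw [Finset.mem_coe, Finset.mem_filter] at h₁ h₂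
        apply Subtype.ext
        rw [← Finset.insert_erase h₁.2, ← Finset.insert_erase h₂.2]
        exact congrArg (insert i) hee
    calc _ ≤ (Finset.powersetCard (r-1) (Finset.univ : Finset (Fin n))).card := hinj
      _ = Nat.choose n (r-1) := by
          rw [Finset.card_powersetCard, Finset.card_univ, Fintype.card_fin]
      _ ≤ n ^ (r-1) := Nat.choose_le_pow _ _
  exact_mod_cast hnat

lemma quad_bound {n r : ℕ} (g : Fin n → ℝ) :
    ∑ e : Edge n r, (∑ i ∈ e.1, g i) ^ 2
      ≤ ((r : ℝ) * (n : ℝ) ^ (r - 1)) * ∑ i, g i ^ 2 := by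
  have step1 : ∀ e : Edge n r, (∑ i ∈ e.1, g i) ^ 2 ≤ (r : ℝ) * ∑ i ∈ e.1, g i ^ 2 := by
    intro e
    have h := sq_sum_le_card_mul_sum_sq (s := e.1) (f := g)
    rw [e.2] at h
    exact_mod_cast h
  calc ∑ e : Edge n r, (∑ i ∈ e.1, g i) ^ 2
      ≤ ∑ e : Edge n r, (r : ℝ) * ∑ i ∈ e.1, g i ^ 2 :=
        Finset.sum_le_sum fun e _ => step1 e
    _ = (r : ℝ) * ∑ e : Edge n r, ∑ i, (if i ∈ e.1 then g i ^ 2 else 0) := by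
        rw [← Finset.mul_sum]
        congr 1
        refine Finset.sum_congr rfl fun e _ => ?_
        rw [Finset.sum_ite_mem, Finset.univ_inter]
    _ = (r : ℝ) * ∑ i, ((Finset.univ.filter fun e : Edge n r => i ∈ e.1).card : ℝ) * g i ^ 2 := by
        congr 1
        rw [Finset.sum_comm]
        refine Finset.sum_congr rfl fun i _ => ?_
        rw [Finset.sum_ite, Finset.sum_const_zero, add_zero, Finset.sum_const, nsmul_eq_mul]
    _ ≤ ((r : ℝ) * (n : ℝ) ^ (r - 1)) * ∑ i, g i ^ 2 := by
        rw [mul_assoc]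
        apply mul_le_mul_of_nonneg_left _ (by positivity : (0:ℝ) ≤ (r:ℝ))
        rw [Finset.mul_sum]
        refine Finset.sum_le_sum fun i _ => ?_
        exact mul_le_mul_of_nonneg_right (card_edges_mem i) (sq_nonneg _)

lemma Zdecomp {n r : ℕ} (β : Fin n → ℝ) (G : HG n r) (i : Fin n) :
    (deg G i : ℝ) - μdeg n r β i
      = ∑ e : Edge n r, if i ∈ e.1 then
          ((if G e then (1:ℝ) else 0) - sigmoid (∑ j ∈ e.1, β j)) else 0 := by
  have hdeg : (deg G i : ℝ) = ∑ e : Edge n r,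
      if i ∈ e.1 then (if G e then (1:ℝ) else 0) else 0 := by
    rw [deg, Finset.card_filter]
    push_cast
    refine Finset.sum_congr rfl fun e _ => ?_
    by_cases h1 : G e <;> by_cases h2 : i ∈ e.1 <;> simp [h1, h2]
  rw [hdeg, μdeg, ← Finset.sum_sub_distrib]
  refine Finset.sum_congr rfl fun e _ => ?_
  by_cases h2 : i ∈ e.1 <;> simp [h2]

lemma inner_swap {n r : ℕ} (β : Fin n → ℝ) (G : HG n r) (v : Fin n → ℝ) :
    ∑ i, v i * ((deg G i : ℝ) - μdeg n r β i)
      = ∑ e : Edge n r, (∑ j ∈ e.1, v j) *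
          ((if G e then (1:ℝ) else 0) - sigmoid (∑ j ∈ e.1, β j)) := by
  simp_rw [Zdecomp β G, Finset.mul_sum]
  rw [Finset.sum_comm]
  refine Finset.sum_congr rfl fun e _ => ?_
  rw [Finset.sum_mul]
  rw [← Finset.sum_filter_add_sum_filter_not Finset.univ (fun i => i ∈ e.1)]
  have h2 : ∑ i ∈ Finset.univ.filter (fun i => ¬ i ∈ e.1),
      (v i * if i ∈ e.1 then ((if G e then (1:ℝ) else 0) - sigmoid (∑ j ∈ e.1, β j)) else 0)
        = 0 := by
    apply Finset.sum_eq_zero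
    intro i hi
    rw [Finset.mem_filter] at hi
    simp [hi.2]
  rw [h2, add_zero]
  rw [Finset.filter_univ_mem]
  refine Finset.sum_congr rfl fun i hi => ?_
  simp [hi]

end Stmt16Aux

/-- Concentration of the `r`-degree sequence around its mean:
`‖d(G) − E_β[d(G)]‖₂ ≤ C₁₀ n^{r/2}` with probability at least `1 − e^{−c₁₀ n}`. -/
theorem stmt16 (r : ℕ) (hr : 2 ≤ r) (M : ℝ) (hM : 0 < M) :
    ∃ c₁₀ C₁₀ : ℝ, 0 < c₁₀ ∧ 0 < C₁₀ ∧
      ∀ (n : ℕ), r ≤ n → ∀ β : Fin n → ℝ, inBall M β →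
        1 - Real.exp (-c₁₀ * n) ≤
          ∑ G : HG n r, hgWeight β G *
            ind (Real.sqrt (∑ i, ((deg G i : ℝ) - μdeg n r β i) ^ 2) ≤
              C₁₀ * (n : ℝ) ^ ((r : ℝ) / 2)) := by
  classical
  have hr0 : (0:ℝ) < (r:ℝ) := by exact_mod_cast lt_of_lt_of_le two_pos hr
  refine ⟨1, 4 * Real.sqrt r, one_pos,
    mul_pos (by norm_num) (Real.sqrt_pos.mpr hr0), ?_⟩
  intro n hn β hβ
  set C : ℝ := 4 * Real.sqrt r with hC
  have hCpos : 0 < C := mul_pos (by norm_num) (Real.sqrt_pos.mpr hr0)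
  have hC2 : C ^ 2 = 16 * (r:ℝ) := by
    rw [hC, mul_pow, Real.sq_sqrt (le_of_lt hr0)]; norm_num
  have hn1 : (1:ℝ) ≤ (n:ℝ) := by
    have : 1 ≤ n := le_trans (le_trans one_le_two hr) hn
    exact_mod_cast this
  have hnpos : (0:ℝ) < (n:ℝ) := lt_of_lt_of_le one_pos hn1
  -- edge probabilities
  set p : Edge n r → ℝ := fun e => sigmoid (∑ j ∈ e.1, β j) with hpdef
  have hp0 : ∀ e, 0 ≤ p e := fun e => sigmoid_nonneg' _
  have hp1 : ∀ e, p e ≤ 1 := fun e => sigmoid_le_one' _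
  have hwdef : ∀ G : HG n r, hgWeight β G = ∏ e, (if G e then p e else 1 - p e) := by
    intro G; rfl
  have hw0 : ∀ G : HG n r, 0 ≤ hgWeight β G := by
    intro G
    rw [hwdef]
    apply Finset.prod_nonneg
    intro e _
    by_cases h : G e <;> simp [h]
    · exact hp0 e
    · linarith [hp1 e]
  have hwsum : ∑ G : HG n r, hgWeight β G = 1 := by
    simp_rw [hwdef]
    exact sum_weight_one p
  -- variance proxy
  set Λ : ℝ := (r:ℝ) * (n:ℝ) ^ (r - 1) with hΛdef
  have hΛpos : 0 < Λ := mul_pos hr0 (by positivity)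
  set s : ℝ := Real.sqrt (1 / (4 * Λ)) with hsdef
  have hs2 : s ^ 2 = 1 / (4 * Λ) := Real.sq_sqrt (by positivity)
  -- centered degrees
  set Z : HG n r → Fin n → ℝ := fun G i => (deg G i : ℝ) - μdeg n r β i with hZdef
  set S : HG n r → ℝ := fun G => ∑ i, Z G i ^ 2 with hSdef
  have hS0 : ∀ G, 0 ≤ S G := fun G => Finset.sum_nonneg fun i _ => sq_nonneg _
  -- MGF bound in a fixed direction
  have H2 : ∀ g : Fin n → ℝ,
      ∑ G : HG n r, hgWeight β G * Real.exp (∑ i, s * g i * Z G i)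
        ≤ Real.exp (∑ i, g i ^ 2 / 8) := by
    intro g
    have hswap : ∀ G : HG n r, ∑ i, s * g i * Z G i
        = ∑ e : Edge n r, (s * ∑ j ∈ e.1, g j) * ((if G e then (1:ℝ) else 0) - p e) := by
      intro G
      have h := inner_swap β G (fun i => s * g i)
      simp only [hZdef]
      rw [h]
      refine Finset.sum_congr rfl fun e _ => ?_
      rw [Finset.mul_sum]
    calc ∑ G : HG n r, hgWeight β G * Real.exp (∑ i, s * g i * Z G i)
        = ∑ G : HG n r, (∏ e, if G e then p e else 1 - p e) *
            Real.exp (∑ e : Edge n r,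
              (s * ∑ j ∈ e.1, g j) * ((if G e then (1:ℝ) else 0) - p e)) := by
          refine Finset.sum_congr rfl fun G _ => ?_
          rw [hwdef, hswap]
      _ ≤ Real.exp (∑ e : Edge n r, (s * ∑ j ∈ e.1, g j) ^ 2 / 2) :=
          sum_weight_exp p (fun e => s * ∑ j ∈ e.1, g j) hp0 hp1
      _ ≤ Real.exp (∑ i, g i ^ 2 / 8) := by
          apply Real.exp_le_exp.mpr
          have hq := quad_bound (n := n) (r := r) g
          have hexp : ∑ e : Edge n r, (s * ∑ j ∈ e.1, g j) ^ 2 / 2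
              = s ^ 2 / 2 * ∑ e : Edge n r, (∑ j ∈ e.1, g j) ^ 2 := by
            rw [Finset.mul_sum]
            refine Finset.sum_congr rfl fun e _ => ?_
            ring
          rw [hexp, hs2]
          have h8 : ∑ i, g i ^ 2 / 8 = (1 / 8) * ∑ i, g i ^ 2 := by
            rw [Finset.mul_sum]
            refine Finset.sum_congr rfl fun i _ => ?_
            ring
          rw [h8]
          calc 1 / (4 * Λ) / 2 * ∑ e : Edge n r, (∑ j ∈ e.1, g j) ^ 2
              ≤ 1 / (4 * Λ) / 2 * (Λ * ∑ i, g i ^ 2) := by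
                apply mul_le_mul_of_nonneg_left _ (by positivity)
                exact hq
            _ = (1 / 8) * ∑ i, g i ^ 2 := by
                field_simp
                ring
  -- Gaussian linearization: the exponential moment bound
  set c0 : ℝ := (Real.sqrt (2 * Real.pi))⁻¹ with hc0def
  have h2pi : (0:ℝ) < Real.sqrt (2 * Real.pi) := Real.sqrt_pos.mpr (by positivity)
  have hc0pos : 0 < c0 := inv_pos.mpr h2pi
  have H3 : ∀ G : HG n r, Real.exp (s ^ 2 / 2 * S G)
      = c0 ^ n * ∫ g : Fin n → ℝ, ∏ i, Real.exp (s * Z G i * g i - g i ^ 2 / 2) := by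
    intro G
    have h1 : s ^ 2 / 2 * S G = ∑ i, (s * Z G i) ^ 2 / 2 := by
      rw [hSdef, Finset.mul_sum]
      refine Finset.sum_congr rfl fun i _ => ?_
      ring
    rw [h1, Real.exp_sum]
    have h2 : ∀ i, Real.exp ((s * Z G i) ^ 2 / 2)
        = c0 * ∫ x : ℝ, Real.exp (s * Z G i * x - x ^ 2 / 2) := by
      intro i
      rw [gauss_lin (s * Z G i), hc0def]
      field_simp
    simp_rw [h2]
    rw [Finset.prod_mul_distrib, Finset.prod_const, Finset.card_univ, Fintype.card_fin]
    congr 1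
    exact (MeasureTheory.integral_fintype_prod_eq_prod (ι := Fin n)
      (fun i x => Real.exp (s * Z G i * x - x ^ 2 / 2))).symm
  -- integrability
  have hint : ∀ G : HG n r, Integrable
      (fun g : Fin n → ℝ => hgWeight β G * ∏ i, Real.exp (s * Z G i * g i - g i ^ 2 / 2)) := by
    intro G
    exact (MeasureTheory.Integrable.fintype_prod
      (f := fun i x => Real.exp (s * Z G i * x - x ^ 2 / 2))
      (fun i => gauss_lin_integrable _)).const_mul _
  have hintR : Integrable (fun g : Fin n → ℝ => ∏ i, Real.exp (-(3/8) * g i ^ 2)) :=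
    MeasureTheory.Integrable.fintype_prod
      (f := fun _ x => Real.exp (-(3/8) * x ^ 2))
      (fun i => integrable_exp_neg_mul_sq (by norm_num))
  -- pointwise bound
  have hpt : ∀ g : Fin n → ℝ,
      ∑ G : HG n r, hgWeight β G * ∏ i, Real.exp (s * Z G i * g i - g i ^ 2 / 2)
        ≤ ∏ i, Real.exp (-(3/8) * g i ^ 2) := by
    intro g
    have hfac : ∀ G : HG n r, ∏ i, Real.exp (s * Z G i * g i - g i ^ 2 / 2)
        = Real.exp (∑ i, s * g i * Z G i) * Real.exp (∑ i, -(g i ^ 2 / 2)) := by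
      intro G
      rw [← Real.exp_sum, ← Real.exp_add, ← Finset.sum_add_distrib]
      congr 1
      refine Finset.sum_congr rfl fun i _ => ?_
      ring
    calc ∑ G : HG n r, hgWeight β G * ∏ i, Real.exp (s * Z G i * g i - g i ^ 2 / 2)
        = Real.exp (∑ i, -(g i ^ 2 / 2)) *
            ∑ G : HG n r, hgWeight β G * Real.exp (∑ i, s * g i * Z G i) := by
          rw [Finset.mul_sum]
          refine Finset.sum_congr rfl fun G _ => ?_
          rw [hfac]
          ring
      _ ≤ Real.exp (∑ i, -(g i ^ 2 / 2)) * Real.exp (∑ i, g i ^ 2 / 8) := by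
          exact mul_le_mul_of_nonneg_left (H2 g) (le_of_lt (Real.exp_pos _))
      _ = ∏ i, Real.exp (-(3/8) * g i ^ 2) := by
          rw [← Real.exp_add, ← Finset.sum_add_distrib, ← Real.exp_sum]
          congr 1
          refine Finset.sum_congr rfl fun i _ => ?_
          ring
  -- exponential moment bound
  have H4 : ∑ G : HG n r, hgWeight β G * Real.exp (s ^ 2 / 2 * S G) ≤ 2 ^ n := by
    have step : ∑ G : HG n r, hgWeight β G * Real.exp (s ^ 2 / 2 * S G)
        = c0 ^ n * ∫ g : Fin n → ℝ,
            ∑ G : HG n r, hgWeight β G * ∏ i, Real.exp (s * Z G i * g i - g i ^ 2 / 2) := by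
      rw [MeasureTheory.integral_finset_sum _ (fun G _ => hint G), Finset.mul_sum]
      refine Finset.sum_congr rfl fun G _ => ?_
      rw [H3 G, MeasureTheory.integral_const_mul]
      ring
    rw [step]
    have hAb : ∫ g : Fin n → ℝ,
        ∑ G : HG n r, hgWeight β G * ∏ i, Real.exp (s * Z G i * g i - g i ^ 2 / 2)
          ≤ ∫ g : Fin n → ℝ, ∏ i, Real.exp (-(3/8) * g i ^ 2) := by
      refine MeasureTheory.integral_mono_of_nonneg
        (Filter.Eventually.of_forall ?_) hintR (Filter.Eventually.of_forall hpt)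
      intro g
      apply Finset.sum_nonneg
      intro G _
      apply mul_nonneg (hw0 G)
      exact Finset.prod_nonneg fun i _ => le_of_lt (Real.exp_pos _)
    have hprod : ∫ g : Fin n → ℝ, ∏ i, Real.exp (-(3/8) * g i ^ 2)
        = (∫ x : ℝ, Real.exp (-(3/8) * x ^ 2)) ^ n := by
      exact (MeasureTheory.integral_fintype_prod_eq_pow (ι := Fin n) (μ := volume)
        (fun x => Real.exp (-(3/8) * x ^ 2))).trans (by rw [Fintype.card_fin])
    have hA0 : 0 ≤ ∫ x : ℝ, Real.exp (-(3/8) * x ^ 2) :=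
      MeasureTheory.integral_nonneg fun x => le_of_lt (Real.exp_pos _)
    calc c0 ^ n * ∫ g : Fin n → ℝ,
          ∑ G : HG n r, hgWeight β G * ∏ i, Real.exp (s * Z G i * g i - g i ^ 2 / 2)
        ≤ c0 ^ n * (∫ x : ℝ, Real.exp (-(3/8) * x ^ 2)) ^ n := by
          apply mul_le_mul_of_nonneg_left _ (by positivity)
          rw [← hprod]
          exact hAb
      _ = (c0 * ∫ x : ℝ, Real.exp (-(3/8) * x ^ 2)) ^ n := by rw [mul_pow]
      _ ≤ 2 ^ n := by
          apply pow_le_pow_left₀ (by positivity)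
          calc c0 * ∫ x : ℝ, Real.exp (-(3/8) * x ^ 2)
              ≤ c0 * (2 * Real.sqrt (2 * Real.pi)) :=
                mul_le_mul_of_nonneg_left gauss_quad (le_of_lt hc0pos)
            _ = 2 := by
                rw [hc0def]
                field_simp
  -- Markov step
  have hpow2 : ((n:ℝ) ^ ((r:ℝ)/2)) ^ 2 = (n:ℝ) ^ r := by
    rw [← Real.rpow_natCast ((n:ℝ) ^ ((r:ℝ)/2)) 2, ← Real.rpow_mul (le_of_lt hnpos)]
    norm_num
  have hexponent : s ^ 2 / 2 * (C ^ 2 * (n:ℝ) ^ r) = 2 * n := by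
    have hnr : (n:ℝ) ^ r = (n:ℝ) ^ (r - 1) * n := by
      rw [← pow_succ]
      congr 1
      omega
    rw [hs2, hC2, hΛdef, hnr]
    have h1 : (n:ℝ) ^ (r-1) ≠ 0 := by positivity
    field_simp
    ring
  have hbadbound : ∀ G : HG n r,
      ind (¬ (Real.sqrt (S G) ≤ C * (n:ℝ) ^ ((r:ℝ)/2)))
        ≤ Real.exp (s ^ 2 / 2 * (S G - C ^ 2 * (n:ℝ) ^ r)) := by
    intro G
    by_cases h : Real.sqrt (S G) ≤ C * (n:ℝ) ^ ((r:ℝ)/2)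
    · rw [ind, if_neg (by simpa using h)]
      exact le_of_lt (Real.exp_pos _)
    · rw [ind, if_pos (by simpa using h)]
      rw [← Real.exp_zero]
      apply Real.exp_le_exp.mpr
      have hlt : C * (n:ℝ) ^ ((r:ℝ)/2) ≤ Real.sqrt (S G) := le_of_not_ge h
      have hsq : (C * (n:ℝ) ^ ((r:ℝ)/2)) ^ 2 ≤ S G := by
        calc (C * (n:ℝ) ^ ((r:ℝ)/2)) ^ 2 ≤ Real.sqrt (S G) ^ 2 :=
              pow_le_pow_left₀ (by positivity) hlt 2
          _ = S G := Real.sq_sqrt (hS0 G)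
      rw [mul_pow, hpow2] at hsq
      have hs2pos : 0 ≤ s ^ 2 / 2 := by positivity
      nlinarith
  have hmarkov : ∑ G : HG n r,
      hgWeight β G * ind (¬ (Real.sqrt (S G) ≤ C * (n:ℝ) ^ ((r:ℝ)/2)))
        ≤ Real.exp (-(n:ℝ)) := by
    calc ∑ G : HG n r, hgWeight β G * ind (¬ (Real.sqrt (S G) ≤ C * (n:ℝ) ^ ((r:ℝ)/2)))
        ≤ ∑ G : HG n r, hgWeight β G *
            Real.exp (s ^ 2 / 2 * (S G - C ^ 2 * (n:ℝ) ^ r)) :=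
          Finset.sum_le_sum fun G _ =>
            mul_le_mul_of_nonneg_left (hbadbound G) (hw0 G)
      _ = Real.exp (- (s ^ 2 / 2 * (C ^ 2 * (n:ℝ) ^ r))) *
            ∑ G : HG n r, hgWeight β G * Real.exp (s ^ 2 / 2 * S G) := by
          rw [Finset.mul_sum]
          refine Finset.sum_congr rfl fun G _ => ?_
          have hx : Real.exp (s ^ 2 / 2 * (S G - C ^ 2 * (n:ℝ) ^ r))
              = Real.exp (- (s ^ 2 / 2 * (C ^ 2 * (n:ℝ) ^ r))) *
                Real.exp (s ^ 2 / 2 * S G) := by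
            rw [← Real.exp_add]
            congr 1
            ring
          rw [hx]
          ring
      _ ≤ Real.exp (- (s ^ 2 / 2 * (C ^ 2 * (n:ℝ) ^ r))) * 2 ^ n :=
          mul_le_mul_of_nonneg_left H4 (le_of_lt (Real.exp_pos _))
      _ ≤ Real.exp (-(n:ℝ)) := by
          rw [hexponent]
          have h2n : (2:ℝ) ^ n ≤ Real.exp n := by
            rw [← Real.exp_one_pow]
            apply pow_le_pow_left₀ (by norm_num)
            linarith [Real.add_one_le_exp 1]
          calc Real.exp (-(2 * (n:ℝ))) * 2 ^ n
              ≤ Real.exp (-(2 * (n:ℝ))) * Real.exp n :=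
                mul_le_mul_of_nonneg_left h2n (le_of_lt (Real.exp_pos _))
            _ = Real.exp (-(n:ℝ)) := by
                rw [← Real.exp_add]
                congr 1
                ring
  -- conclude
  have hsplit : ∑ G : HG n r,
      hgWeight β G * ind (Real.sqrt (S G) ≤ C * (n:ℝ) ^ ((r:ℝ)/2))
        = 1 - ∑ G : HG n r,
            hgWeight β G * ind (¬ (Real.sqrt (S G) ≤ C * (n:ℝ) ^ ((r:ℝ)/2))) := by
    rw [eq_sub_iff_add_eq, ← Finset.sum_add_distrib, ← hwsum]
    refine Finset.sum_congr rfl fun G _ => ?_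
    by_cases h : Real.sqrt (S G) ≤ C * (n:ℝ) ^ ((r:ℝ)/2)
    · rw [ind, ind, if_pos h, if_neg (by simpa using h)]
      ring
    · rw [ind, ind, if_neg h, if_pos (by simpa using h)]
      ring
  have hgoal : (1:ℝ) - Real.exp (-(n:ℝ)) ≤ ∑ G : HG n r,
      hgWeight β G * ind (Real.sqrt (S G) ≤ C * (n:ℝ) ^ ((r:ℝ)/2)) := by
    rw [hsplit]
    linarith [hmarkov]
  have hneg : (-1 : ℝ) * (n:ℝ) = -(n:ℝ) := by ring
  rw [hneg]
  exact hgoal
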